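/- arXiv:2209.04191 — 2 statements merged into one kernel-verified Lean document; each statement's English description precedes it below -/
import Mathlib

section
/- Let N ≥ 1 and let g₁, g₂ ∈ L²(ℝ) be continuous with ∑_{k∈ℤ} sup_{t∈[0,1]}|g_j(t+k)| < ∞ for j=1,2. For coefficients a, b ∈ ℂ^N define V_{g}φ_a(x,ξ) = ∑_{n=0}^{N-1} a_n e^{-2πiξn/N} Z(conj∘g)(n/N - x, ξ). Then the Moyal-type orthogonality relation holds: ∫_0^N ∫_0^1 V_{g₁}φ_a(x,ξ) · conj(V_{g₂}φ_b(x,ξ)) dx dξ = N · (∑_{n=0}^{N-1} a_n conj(b_n)) · ⟨g₂, g₁⟩_{L²}. -/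
open Complex Finset MeasureTheory

/-- The Zak transform. -/
noncomputable def zak (h : ℝ → ℂ) (x ξ : ℝ) : ℂ :=
  ∑' k : ℤ, h (x - k) * Complex.exp (2 * Real.pi * Complex.I * k * ξ)

/-- The STFT of `φ = ∑_{n=0}^{N-1} a_n ε_n ∈ S_N` with window `g`. -/
noncomputable def stftSN (g : ℝ → ℂ) (N : ℕ) (a : Fin N → ℂ) (x ξ : ℝ) : ℂ :=
  ∑ n : Fin N, a n * Complex.exp (-2 * Real.pi * Complex.I * ξ * (n : ℝ) / N) *
    zak (fun t => (starRingEnd ℂ) (g t)) ((n : ℝ) / N - x) ξ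

/-! ### Auxiliary material for the proof of `moyal_flat_torus` -/

open scoped Real ENNReal

set_option maxHeartbeats 1000000

noncomputable section MoyalAux

/-- sup of `‖g (t+k)‖` over the unit interval. -/
def supk (g : ℝ → ℂ) (k : ℤ) : ℝ := ⨆ t : Set.Icc (0:ℝ) 1, ‖g ((t : ℝ) + k)‖

/-- A bound for `‖g (y - k)‖` valid for `y ∈ [-1,1]`. -/
def dbound (g : ℝ → ℂ) (k : ℤ) : ℝ := supk g (-k) + supk g (-k - 1)

lemma supk_nonneg (g : ℝ → ℂ) (k : ℤ) : 0 ≤ supk g k :=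
  Real.iSup_nonneg fun _ => norm_nonneg _

lemma dbound_nonneg (g : ℝ → ℂ) (k : ℤ) : 0 ≤ dbound g k :=
  add_nonneg (supk_nonneg _ _) (supk_nonneg _ _)

lemma le_supk (g : ℝ → ℂ) (hc : Continuous g) {t : ℝ} (ht : t ∈ Set.Icc (0:ℝ) 1) (k : ℤ) :
    ‖g (t + k)‖ ≤ supk g k := by
  have hb : BddAbove (Set.range fun t : Set.Icc (0:ℝ) 1 => ‖g ((t:ℝ) + k)‖) := by
    have : Set.range (fun t : Set.Icc (0:ℝ) 1 => ‖g ((t:ℝ) + k)‖)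
        = (fun t : ℝ => ‖g (t + k)‖) '' Set.Icc 0 1 := by
      ext y
      constructor
      · rintro ⟨⟨t, ht⟩, rfl⟩; exact ⟨t, ht, rfl⟩
      · rintro ⟨t, ht, rfl⟩; exact ⟨⟨t, ht⟩, rfl⟩
    rw [this]
    exact (isCompact_Icc.image (by continuity)).bddAbove
  exact le_ciSup hb ⟨t, ht⟩

lemma norm_le_dbound (g : ℝ → ℂ) (hc : Continuous g) {y : ℝ}
    (hy : y ∈ Set.Icc (-1:ℝ) 1) (k : ℤ) : ‖g (y - k)‖ ≤ dbound g k := by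
  obtain ⟨hy1, hy2⟩ := hy
  rcases le_or_gt 0 y with h0 | h0
  · have : y - k = y + (-k : ℤ) := by push_cast; ring
    rw [this]
    exact le_add_of_le_of_nonneg (le_supk g hc ⟨h0, hy2⟩ (-k)) (supk_nonneg _ _)
  · have : y - k = (y + 1) + (-k - 1 : ℤ) := by push_cast; ring
    rw [this]
    exact le_add_of_nonneg_of_le (supk_nonneg _ _)
      (le_supk g hc ⟨by linarith, by linarith⟩ (-k - 1))

lemma summable_dbound (g : ℝ → ℂ) (hg : Summable (supk g)) : Summable (dbound g) := by
  have h1 : Summable fun k : ℤ => supk g (-k) :=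
    hg.comp_injective neg_injective
  have h2 : Summable fun k : ℤ => supk g (-k - 1) :=
    hg.comp_injective (fun x y h => by omega)
  exact h1.add h2

lemma norm_exp_I (r : ℝ) : ‖Complex.exp ((r:ℂ) * Complex.I)‖ = 1 := by
  rw [Complex.norm_exp_ofReal_mul_I]

lemma summable_norm_u (g : ℝ → ℂ) (hc : Continuous g) (hg : Summable (supk g))
    {y : ℝ} (hy : y ∈ Set.Icc (-1:ℝ) 1) (ξ : ℝ) :
    Summable fun k : ℤ =>
      ‖(starRingEnd ℂ) (g (y - k)) * Complex.exp (2 * Real.pi * Complex.I * k * ξ)‖ := by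
  refine Summable.of_nonneg_of_le (fun k => norm_nonneg _) (fun k => ?_) (summable_dbound g hg)
  rw [norm_mul, RCLike.norm_conj]
  have he : (2 * (Real.pi:ℂ) * Complex.I * (k:ℤ) * (ξ:ℝ)) = ((2*Real.pi*k*ξ : ℝ):ℂ) * Complex.I := by
    push_cast; ring
  rw [he, norm_exp_I, mul_one]
  exact norm_le_dbound g hc hy k

lemma summable_norm_v (g : ℝ → ℂ) (hc : Continuous g) (hg : Summable (supk g))
    {y : ℝ} (hy : y ∈ Set.Icc (-1:ℝ) 1) (ξ : ℝ) :
    Summable fun j : ℤ =>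
      ‖g (y - j) * Complex.exp (-(2 * Real.pi * Complex.I * j * ξ))‖ := by
  refine Summable.of_nonneg_of_le (fun k => norm_nonneg _) (fun j => ?_) (summable_dbound g hg)
  have he : (-(2 * (Real.pi:ℂ) * Complex.I * (j:ℤ) * (ξ:ℝ))) = ((-(2*Real.pi*j*ξ) : ℝ):ℂ) * Complex.I := by
    push_cast; ring
  rw [norm_mul, he, norm_exp_I, mul_one]
  exact norm_le_dbound g hc hy j

lemma conj_zak (g : ℝ → ℂ) (y ξ : ℝ) :
    (starRingEnd ℂ) (zak (fun t => (starRingEnd ℂ) (g t)) y ξ)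
      = ∑' j : ℤ, g (y - j) * Complex.exp (-(2 * Real.pi * Complex.I * j * ξ)) := by
  rw [zak, starRingEnd_apply, tsum_star]
  congr 1
  funext j
  rw [star_mul']
  congr 1
  · exact star_star _
  · rw [← starRingEnd_apply, ← Complex.exp_conj]
    congr 1
    simp only [map_mul, Complex.conj_I, map_ofNat, Complex.conj_ofReal, map_intCast]
    ring

lemma zak_mul_conj (g₁ g₂ : ℝ → ℂ) (hc₁ : Continuous g₁) (hc₂ : Continuous g₂)
    (hg₁ : Summable (supk g₁)) (hg₂ : Summable (supk g₂))
    {y₁ y₂ : ℝ} (hy₁ : y₁ ∈ Set.Icc (-1:ℝ) 1) (hy₂ : y₂ ∈ Set.Icc (-1:ℝ) 1) (ξ : ℝ) :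
    zak (fun t => (starRingEnd ℂ) (g₁ t)) y₁ ξ *
      (starRingEnd ℂ) (zak (fun t => (starRingEnd ℂ) (g₂ t)) y₂ ξ)
      = ∑' p : ℤ × ℤ, ((starRingEnd ℂ) (g₁ (y₁ - p.1)) * g₂ (y₂ - p.2)) *
          Complex.exp (2 * Real.pi * Complex.I * ((p.1 : ℝ) - (p.2 : ℝ)) * ξ) := by
  rw [conj_zak, zak,
    tsum_mul_tsum_of_summable_norm (summable_norm_u g₁ hc₁ hg₁ hy₁ ξ)
      (summable_norm_v g₂ hc₂ hg₂ hy₂ ξ)]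
  congr 1
  funext p
  rw [mul_mul_mul_comm, ← Complex.exp_add]
  congr 2
  push_cast
  ring

/-- The index set of the fully expanded integrand. -/
abbrev Idx (N : ℕ) := (Fin N × Fin N) × ℤ × ℤ

/-- The frequency of the `r`-th term. -/
def thet (N : ℕ) (r : Idx N) : ℝ :=
  ((r.1.2 : ℝ) - (r.1.1 : ℝ)) / N + ((r.2.1 : ℝ) - (r.2.2 : ℝ))

/-- The `x`-dependent factor of the `r`-th term. -/
def Pfun (g₁ g₂ : ℝ → ℂ) (N : ℕ) (r : Idx N) (x : ℝ) : ℂ :=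
  (starRingEnd ℂ) (g₁ ((r.1.1 : ℝ)/N - x - r.2.1)) * g₂ ((r.1.2 : ℝ)/N - x - r.2.2)

/-- The fully expanded term of the integrand. -/
def Tfun (g₁ g₂ : ℝ → ℂ) (N : ℕ) (a b : Fin N → ℂ) (r : Idx N) (x ξ : ℝ) : ℂ :=
  a r.1.1 * (starRingEnd ℂ) (b r.1.2) * Pfun g₁ g₂ N r x *
    Complex.exp (2 * Real.pi * Complex.I * (thet N r) * ξ)

lemma sub_mem_Icc' {N : ℕ} (hN : 1 ≤ N) (n : Fin N) {x : ℝ} (hx : x ∈ Set.Icc (0:ℝ) 1) :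
    (n : ℝ)/N - x ∈ Set.Icc (-1:ℝ) 1 := by
  have h0 : (0:ℝ) < N := by exact_mod_cast Nat.lt_of_lt_of_le Nat.zero_lt_one hN
  have h1 : (0:ℝ) ≤ (n : ℝ)/N := div_nonneg (Nat.cast_nonneg _) h0.le
  have h2 : (n : ℝ)/N ≤ 1 := by
    rw [div_le_one h0]
    exact_mod_cast (n.isLt).le
  obtain ⟨hx0, hx1⟩ := hx
  constructor <;> [linarith; linarith]

/-- Norm bound for `Tfun`, valid for `x ∈ [0,1]`. -/
lemma norm_Tfun_le (g₁ g₂ : ℝ → ℂ) (hc₁ : Continuous g₁) (hc₂ : Continuous g₂)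
    (N : ℕ) (hN : 1 ≤ N) (a b : Fin N → ℂ) (r : Idx N) {x : ℝ}
    (hx : x ∈ Set.Icc (0:ℝ) 1) (ξ : ℝ) :
    ‖Tfun g₁ g₂ N a b r x ξ‖ ≤
      (‖a r.1.1‖ * ‖b r.1.2‖) * (dbound g₁ r.2.1 * dbound g₂ r.2.2) := by
  rw [Tfun, Pfun]
  have he : (2 * (Real.pi:ℂ) * Complex.I * (thet N r : ℝ) * (ξ:ℝ))
      = ((2*Real.pi*(thet N r)*ξ : ℝ):ℂ) * Complex.I := by push_cast; ring
  rw [norm_mul, norm_mul, norm_mul, norm_mul, he, norm_exp_I, mul_one, RCLike.norm_conj,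
    RCLike.norm_conj]
  have b₁ : ‖g₁ ((r.1.1 : ℝ)/N - x - r.2.1)‖ ≤ dbound g₁ r.2.1 :=
    norm_le_dbound g₁ hc₁ (sub_mem_Icc' hN r.1.1 hx) r.2.1
  have b₂ : ‖g₂ ((r.1.2 : ℝ)/N - x - r.2.2)‖ ≤ dbound g₂ r.2.2 :=
    norm_le_dbound g₂ hc₂ (sub_mem_Icc' hN r.1.2 hx) r.2.2
  have h1 : (0:ℝ) ≤ dbound g₁ r.2.1 := dbound_nonneg _ _
  have h2 : (0:ℝ) ≤ dbound g₂ r.2.2 := dbound_nonneg _ _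
  have := mul_le_mul b₁ b₂ (norm_nonneg _) h1
  nlinarith [norm_nonneg (a r.1.1), norm_nonneg (b r.1.2),
    norm_nonneg (g₁ ((r.1.1 : ℝ)/N - x - r.2.1)), norm_nonneg (g₂ ((r.1.2 : ℝ)/N - x - r.2.2)),
    mul_nonneg (norm_nonneg (a r.1.1)) (norm_nonneg (b r.1.2))]

/-- The bound is summable over the index set. -/
lemma summable_bound (g₁ g₂ : ℝ → ℂ) (hg₁ : Summable (supk g₁)) (hg₂ : Summable (supk g₂))
    (N : ℕ) (a b : Fin N → ℂ) :
    Summable fun r : Idx N =>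
      (‖a r.1.1‖ * ‖b r.1.2‖) * (dbound g₁ r.2.1 * dbound g₂ r.2.2) := by
  have h2 : Summable (fun p : ℤ × ℤ => dbound g₁ p.1 * dbound g₂ p.2) :=
    Summable.mul_of_nonneg (summable_dbound g₁ hg₁) (summable_dbound g₂ hg₂)
      (fun k => dbound_nonneg _ _) (fun k => dbound_nonneg _ _)
  have h1 : Summable (fun q : Fin N × Fin N => ‖a q.1‖ * ‖b q.2‖) := .of_finite
  exact Summable.mul_of_nonneg h1 h2 (fun q => by positivity)
    (fun p => mul_nonneg (dbound_nonneg _ _) (dbound_nonneg _ _))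

lemma summable_Tfun (g₁ g₂ : ℝ → ℂ) (hc₁ : Continuous g₁) (hc₂ : Continuous g₂)
    (hg₁ : Summable (supk g₁)) (hg₂ : Summable (supk g₂))
    (N : ℕ) (hN : 1 ≤ N) (a b : Fin N → ℂ) {x : ℝ} (hx : x ∈ Set.Icc (0:ℝ) 1) (ξ : ℝ) :
    Summable fun r : Idx N => ‖Tfun g₁ g₂ N a b r x ξ‖ :=
  Summable.of_nonneg_of_le (fun r => norm_nonneg _)
    (fun r => norm_Tfun_le g₁ g₂ hc₁ hc₂ N hN a b r hx ξ)
    (summable_bound g₁ g₂ hg₁ hg₂ N a b)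

/-- The pointwise expansion of the integrand, valid for `x ∈ [0,1]`. -/
lemma integrand_eq (g₁ g₂ : ℝ → ℂ) (hc₁ : Continuous g₁) (hc₂ : Continuous g₂)
    (hg₁ : Summable (supk g₁)) (hg₂ : Summable (supk g₂))
    (N : ℕ) (hN : 1 ≤ N) (a b : Fin N → ℂ) {x : ℝ} (hx : x ∈ Set.Icc (0:ℝ) 1) (ξ : ℝ) :
    stftSN g₁ N a x ξ * (starRingEnd ℂ) (stftSN g₂ N b x ξ)
      = ∑' r : Idx N, Tfun g₁ g₂ N a b r x ξ := by
  have hsum : Summable fun r : Idx N => Tfun g₁ g₂ N a b r x ξ :=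
    (summable_Tfun g₁ g₂ hc₁ hc₂ hg₁ hg₂ N hN a b hx ξ).of_norm
  rw [Summable.tsum_prod' hsum hsum.prod_factor, tsum_fintype, stftSN, stftSN, map_sum,
    Finset.sum_mul_sum, Fintype.sum_prod_type]
  refine Finset.sum_congr rfl fun n _ => Finset.sum_congr rfl fun m _ => ?_
  rw [map_mul, map_mul]
  have hconjE : (starRingEnd ℂ) (Complex.exp (-2 * Real.pi * Complex.I * ξ * (m : ℝ) / N))
      = Complex.exp (2 * Real.pi * Complex.I * ξ * (m : ℝ) / N) := by
    rw [← Complex.exp_conj]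
    congr 1
    simp only [map_div₀, map_mul, map_neg, map_ofNat, Complex.conj_I, Complex.conj_ofReal,
      map_natCast]
    ring
  rw [hconjE]
  have := zak_mul_conj g₁ g₂ hc₁ hc₂ hg₁ hg₂ (sub_mem_Icc' hN n hx) (sub_mem_Icc' hN m hx) ξ
  calc a n * Complex.exp (-2 * Real.pi * Complex.I * ξ * (n : ℝ) / N) *
        zak (fun t => (starRingEnd ℂ) (g₁ t)) ((n : ℝ) / N - x) ξ *
        ((starRingEnd ℂ) (b m) * Complex.exp (2 * Real.pi * Complex.I * ξ * (m : ℝ) / N) *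
          (starRingEnd ℂ) (zak (fun t => (starRingEnd ℂ) (g₂ t)) ((m : ℝ) / N - x) ξ))
      = (a n * (starRingEnd ℂ) (b m) * Complex.exp (-2 * Real.pi * Complex.I * ξ * (n : ℝ) / N) *
          Complex.exp (2 * Real.pi * Complex.I * ξ * (m : ℝ) / N)) *
        (zak (fun t => (starRingEnd ℂ) (g₁ t)) ((n : ℝ) / N - x) ξ *
          (starRingEnd ℂ) (zak (fun t => (starRingEnd ℂ) (g₂ t)) ((m : ℝ) / N - x) ξ)) := by ring
    _ = ∑' p : ℤ × ℤ, Tfun g₁ g₂ N a b ((n, m), p) x ξ := by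
        rw [this, ← tsum_mul_left]
        refine tsum_congr fun p => ?_
        rw [Tfun, Pfun]
        have hsplit : Complex.exp (2 * Real.pi * Complex.I * (thet N ((n,m),p) : ℝ) * ξ)
            = Complex.exp (-2 * Real.pi * Complex.I * ξ * (n : ℝ) / N) *
              Complex.exp (2 * Real.pi * Complex.I * ξ * (m : ℝ) / N) *
              Complex.exp (2 * Real.pi * Complex.I * ((p.1 : ℝ) - (p.2 : ℝ)) * ξ) := by
          rw [← Complex.exp_add, ← Complex.exp_add]
          congr 1
          rw [thet]
          push_cast
          ring
        rw [hsplit]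
        ring

/-- thet vanishes iff the indices are diagonal. -/
lemma thet_eq_zero_iff (N : ℕ) (hN : 1 ≤ N) (r : Idx N) :
    thet N r = 0 ↔ (r.1.1 = r.1.2 ∧ r.2.1 = r.2.2) := by
  obtain ⟨⟨n, m⟩, k, j⟩ := r
  have hN0 : (0:ℝ) < N := by exact_mod_cast Nat.lt_of_lt_of_le Nat.zero_lt_one hN
  simp only [thet]
  constructor
  · intro h
    have h' : ((m : ℝ) - n) + ((k : ℝ) - j) * N = 0 := by
      field_simp at h
      linarith [h]
    have hint : ((m : ℤ) - (n : ℤ)) + ((k : ℤ) - j) * N = 0 := by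
      have : (((m : ℤ) - (n : ℤ)) + ((k : ℤ) - j) * (N:ℤ) : ℝ) = 0 := by push_cast; linarith
      exact_mod_cast this
    have hmn : |(m : ℤ) - (n : ℤ)| < N := by
      have h1 : (m : ℤ) < N := by exact_mod_cast m.isLt
      have h2 : (n : ℤ) < N := by exact_mod_cast n.isLt
      have h3 : 0 ≤ (m : ℤ) := Int.ofNat_nonneg _
      have h4 : 0 ≤ (n : ℤ) := Int.ofNat_nonneg _
      rw [abs_lt]; omega
    have hkj : k = j := by
      by_contra hne
      have h1 : 1 ≤ |k - j| := Int.one_le_abs (by omega)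
      have h2 : |((k : ℤ) - j) * N| = |(m : ℤ) - (n : ℤ)| := by
        rw [show ((k : ℤ) - j) * N = -((m:ℤ) - n) by omega]
        rw [abs_neg]
      have h3 : (N:ℤ) ≤ |((k : ℤ) - j) * N| := by
        rw [abs_mul]
        calc (N:ℤ) = 1 * N := (one_mul _).symm
        _ ≤ |k - j| * |(N:ℤ)| := by
            apply mul_le_mul h1 (le_abs_self _) (by positivity) (abs_nonneg _)
      omega
    subst hkj
    have hmn0 : (m : ℤ) = (n : ℤ) := by omega
    exact ⟨(Fin.ext (by exact_mod_cast hmn0.symm)), rfl⟩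
  · rintro ⟨h1, h2⟩
    rw [h1, h2]
    simp

/-- Evaluation of the frequency integral. -/
lemma integral_exp_thet (N : ℕ) (hN : 1 ≤ N) (r : Idx N) :
    (∫ ξ in Set.Ioc (0:ℝ) (N:ℝ), Complex.exp (2 * Real.pi * Complex.I * (thet N r) * ξ))
      = if r.1.1 = r.1.2 ∧ r.2.1 = r.2.2 then (N:ℂ) else 0 := by
  have hN0 : (0:ℝ) ≤ (N:ℝ) := Nat.cast_nonneg _
  rw [← intervalIntegral.integral_of_le hN0]
  by_cases h : thet N r = 0
  · rw [if_pos ((thet_eq_zero_iff N hN r).1 h), h]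
    simp
  · rw [if_neg (fun hd => h ((thet_eq_zero_iff N hN r).2 hd))]
    have hc : (2 * (Real.pi:ℂ) * Complex.I * (thet N r : ℝ)) ≠ 0 := by
      apply mul_ne_zero
      apply mul_ne_zero
      · simp [Real.pi_ne_zero]
      · exact Complex.I_ne_zero
      · exact_mod_cast Complex.ofReal_ne_zero.2 h
    have := integral_exp_mul_complex (a := 0) (b := (N:ℝ)) hc
    rw [show (∫ ξ in (0:ℝ)..(N:ℝ), Complex.exp (2 * Real.pi * Complex.I * (thet N r) * ξ))
        = ∫ ξ in (0:ℝ)..(N:ℝ), Complex.exp ((2 * Real.pi * Complex.I * (thet N r)) * ξ) from rfl,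
      this]
    have hexp : Complex.exp (2 * (Real.pi:ℂ) * Complex.I * (thet N r : ℝ) * (N:ℝ)) = 1 := by
      obtain ⟨⟨n, m⟩, k, j⟩ := r
      have hNne : (N:ℂ) ≠ 0 := by
        exact_mod_cast Nat.cast_ne_zero.2 (by omega)
      have harg : 2 * (Real.pi:ℂ) * Complex.I * ((thet N ((n,m),(k,j)) : ℝ):ℂ) * (N:ℝ)
          = (((m:ℤ) - (n:ℤ) + ((k:ℤ) - (j:ℤ)) * N : ℤ) : ℂ) * (2 * Real.pi * Complex.I) := by
        simp only [thet]
        push_cast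
        field_simp
      rw [harg, Complex.exp_int_mul_two_pi_mul_I]
    rw [hexp]
    simp

lemma continuous_Pfun (g₁ g₂ : ℝ → ℂ) (hc₁ : Continuous g₁) (hc₂ : Continuous g₂)
    (N : ℕ) (r : Idx N) : Continuous fun x => Pfun g₁ g₂ N r x := by
  unfold Pfun
  exact ((continuous_star.comp (hc₁.comp (by continuity))).mul (hc₂.comp (by continuity)))

lemma norm_Pfun_le (g₁ g₂ : ℝ → ℂ) (hc₁ : Continuous g₁) (hc₂ : Continuous g₂)
    (N : ℕ) (hN : 1 ≤ N) (r : Idx N) {x : ℝ} (hx : x ∈ Set.Icc (0:ℝ) 1) :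
    ‖Pfun g₁ g₂ N r x‖ ≤ dbound g₁ r.2.1 * dbound g₂ r.2.2 := by
  rw [Pfun, norm_mul, RCLike.norm_conj]
  exact mul_le_mul (norm_le_dbound g₁ hc₁ (sub_mem_Icc' hN r.1.1 hx) r.2.1)
    (norm_le_dbound g₂ hc₂ (sub_mem_Icc' hN r.1.2 hx) r.2.2)
    (norm_nonneg _) (dbound_nonneg _ _)

/-- The constant (in `ξ`) factor of each term: the `x`-integral. -/
def Cint (g₁ g₂ : ℝ → ℂ) (N : ℕ) (r : Idx N) : ℂ := ∫ x in Set.Ioc (0:ℝ) 1, Pfun g₁ g₂ N r x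

lemma norm_Cint_le (g₁ g₂ : ℝ → ℂ) (hc₁ : Continuous g₁) (hc₂ : Continuous g₂)
    (N : ℕ) (hN : 1 ≤ N) (r : Idx N) :
    ‖Cint g₁ g₂ N r‖ ≤ dbound g₁ r.2.1 * dbound g₂ r.2.2 := by
  have h := norm_setIntegral_le_of_norm_le_const (μ := volume) (s := Set.Ioc (0:ℝ) 1)
    (f := fun x => Pfun g₁ g₂ N r x) (C := dbound g₁ r.2.1 * dbound g₂ r.2.2)
    (by rw [Real.volume_Ioc]; exact ENNReal.ofReal_lt_top)
    (fun x hx => norm_Pfun_le g₁ g₂ hc₁ hc₂ N hN r (Set.Ioc_subset_Icc_self hx))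
  rw [Real.volume_real_Ioc] at h
  simpa [Cint] using h

/-- the inner integral computation, for each fixed `ξ`. -/
lemma step_inner (g₁ g₂ : ℝ → ℂ) (hc₁ : Continuous g₁) (hc₂ : Continuous g₂)
    (hg₁ : Summable (supk g₁)) (hg₂ : Summable (supk g₂))
    (N : ℕ) (hN : 1 ≤ N) (a b : Fin N → ℂ) (ξ : ℝ) :
    (∫ x in (0:ℝ)..1, stftSN g₁ N a x ξ * (starRingEnd ℂ) (stftSN g₂ N b x ξ))
      = ∑' r : Idx N, a r.1.1 * (starRingEnd ℂ) (b r.1.2) * Cint g₁ g₂ N r *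
          Complex.exp (2 * Real.pi * Complex.I * (thet N r) * ξ) := by
  rw [intervalIntegral.integral_of_le zero_le_one]
  rw [setIntegral_congr_fun measurableSet_Ioc (fun x hx =>
    integrand_eq g₁ g₂ hc₁ hc₂ hg₁ hg₂ N hN a b (Set.Ioc_subset_Icc_self hx) ξ)]
  rw [← integral_tsum_of_summable_integral_norm ?hint ?hsum]
  · refine tsum_congr fun r => ?_
    have : (fun x => Tfun g₁ g₂ N a b r x ξ) = fun x =>
        (a r.1.1 * (starRingEnd ℂ) (b r.1.2)) * Pfun g₁ g₂ N r x *
          Complex.exp (2 * Real.pi * Complex.I * (thet N r) * ξ) := rfl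
    rw [this]
    rw [Cint]
    rw [integral_mul_const, integral_const_mul]
  case hint =>
    intro r
    apply Continuous.integrableOn_Ioc
    exact (((continuous_const.mul (continuous_Pfun g₁ g₂ hc₁ hc₂ N r))).mul continuous_const)
  case hsum =>
    refine Summable.of_nonneg_of_le (fun r => integral_nonneg fun x => norm_nonneg _)
      (fun r => ?_) (summable_bound g₁ g₂ hg₁ hg₂ N a b)
    have hTc : Continuous fun x => Tfun g₁ g₂ N a b r x ξ := by
      simp only [Tfun]
      exact (continuous_const.mul (continuous_Pfun g₁ g₂ hc₁ hc₂ N r)).mul continuous_const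
    have h1 : (∫ x in Set.Ioc (0:ℝ) 1, ‖Tfun g₁ g₂ N a b r x ξ‖)
        ≤ ∫ _x in Set.Ioc (0:ℝ) 1,
            ((‖a r.1.1‖ * ‖b r.1.2‖) * (dbound g₁ r.2.1 * dbound g₂ r.2.2)) := by
      refine setIntegral_mono_on hTc.norm.integrableOn_Ioc
        (integrableOn_const (by rw [Real.volume_Ioc]; exact ENNReal.ofReal_ne_top))
        measurableSet_Ioc ?_
      exact fun x hx => norm_Tfun_le g₁ g₂ hc₁ hc₂ N hN a b r (Set.Ioc_subset_Icc_self hx) ξ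
    refine h1.trans (le_of_eq ?_)
    rw [setIntegral_const, Real.volume_real_Ioc]
    norm_num

lemma norm_summand_le (g₁ g₂ : ℝ → ℂ) (hc₁ : Continuous g₁) (hc₂ : Continuous g₂)
    (N : ℕ) (hN : 1 ≤ N) (a b : Fin N → ℂ) (r : Idx N) (ξ : ℝ) :
    ‖a r.1.1 * (starRingEnd ℂ) (b r.1.2) * Cint g₁ g₂ N r *
        Complex.exp (2 * Real.pi * Complex.I * (thet N r) * ξ)‖
      ≤ (‖a r.1.1‖ * ‖b r.1.2‖) * (dbound g₁ r.2.1 * dbound g₂ r.2.2) := by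
  have he : (2 * (Real.pi:ℂ) * Complex.I * (thet N r : ℝ) * (ξ:ℝ))
      = ((2*Real.pi*(thet N r)*ξ : ℝ):ℂ) * Complex.I := by push_cast; ring
  rw [norm_mul, norm_mul, norm_mul, he, norm_exp_I, mul_one, RCLike.norm_conj]
  exact mul_le_mul_of_nonneg_left (norm_Cint_le g₁ g₂ hc₁ hc₂ N hN r)
    (mul_nonneg (norm_nonneg _) (norm_nonneg _))

lemma step_outer (g₁ g₂ : ℝ → ℂ) (hc₁ : Continuous g₁) (hc₂ : Continuous g₂)
    (hg₁ : Summable (supk g₁)) (hg₂ : Summable (supk g₂))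
    (N : ℕ) (hN : 1 ≤ N) (a b : Fin N → ℂ) :
    (∫ ξ in (0:ℝ)..(N:ℝ), ∫ x in (0:ℝ)..1,
        stftSN g₁ N a x ξ * (starRingEnd ℂ) (stftSN g₂ N b x ξ))
      = ∑' r : Idx N, a r.1.1 * (starRingEnd ℂ) (b r.1.2) * Cint g₁ g₂ N r *
          (if r.1.1 = r.1.2 ∧ r.2.1 = r.2.2 then (N:ℂ) else 0) := by
  rw [intervalIntegral.integral_of_le (Nat.cast_nonneg N)]
  rw [setIntegral_congr_fun measurableSet_Ioc (fun ξ _ =>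
    step_inner g₁ g₂ hc₁ hc₂ hg₁ hg₂ N hN a b ξ)]
  rw [← integral_tsum_of_summable_integral_norm ?hint ?hsum]
  · refine tsum_congr fun r => ?_
    rw [show (fun ξ : ℝ => a r.1.1 * (starRingEnd ℂ) (b r.1.2) * Cint g₁ g₂ N r *
          Complex.exp (2 * Real.pi * Complex.I * (thet N r) * ξ))
        = fun ξ : ℝ => (a r.1.1 * (starRingEnd ℂ) (b r.1.2) * Cint g₁ g₂ N r) *
          Complex.exp (2 * Real.pi * Complex.I * (thet N r) * ξ) from rfl]
    rw [integral_const_mul, integral_exp_thet N hN r]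
  case hint =>
    intro r
    apply Continuous.integrableOn_Ioc
    apply continuous_const.mul
    have : Continuous fun ξ : ℝ => (2 * Real.pi * Complex.I * (thet N r) : ℂ) * (ξ:ℝ) := by
      exact continuous_const.mul Complex.continuous_ofReal
    exact Complex.continuous_exp.comp (by exact this)
  case hsum =>
    refine Summable.of_nonneg_of_le (fun r => integral_nonneg fun x => norm_nonneg _)
      (fun r => ?_) ((summable_bound g₁ g₂ hg₁ hg₂ N a b).mul_left (N:ℝ))
    have h1 : (∫ ξ in Set.Ioc (0:ℝ) (N:ℝ), ‖a r.1.1 * (starRingEnd ℂ) (b r.1.2) *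
          Cint g₁ g₂ N r * Complex.exp (2 * Real.pi * Complex.I * (thet N r) * ξ)‖)
        ≤ ∫ _ξ in Set.Ioc (0:ℝ) (N:ℝ),
            ((‖a r.1.1‖ * ‖b r.1.2‖) * (dbound g₁ r.2.1 * dbound g₂ r.2.2)) := by
      refine setIntegral_mono_on ?_
        (integrableOn_const (by rw [Real.volume_Ioc]; exact ENNReal.ofReal_ne_top))
        measurableSet_Ioc
        (fun ξ _ => norm_summand_le g₁ g₂ hc₁ hc₂ N hN a b r ξ)
      apply Continuous.integrableOn_Ioc
      apply Continuous.norm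
      apply continuous_const.mul
      exact Complex.continuous_exp.comp (continuous_const.mul Complex.continuous_ofReal)
    refine h1.trans (le_of_eq ?_)
    rw [setIntegral_const, Real.volume_real_Ioc]
    rw [smul_eq_mul, sub_zero, max_eq_left (Nat.cast_nonneg N)]

lemma summable_dd (g₁ g₂ : ℝ → ℂ) (hg₁ : Summable (supk g₁)) (hg₂ : Summable (supk g₂)) :
    Summable fun k : ℤ => dbound g₁ k * dbound g₂ k := by
  have hd₁ := summable_dbound g₁ hg₁
  have hd₂ := summable_dbound g₂ hg₂
  refine Summable.of_nonneg_of_le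
    (fun k => mul_nonneg (dbound_nonneg _ _) (dbound_nonneg _ _)) (fun k => ?_)
    (hd₂.mul_left (∑' k, dbound g₁ k))
  exact mul_le_mul_of_nonneg_right (Summable.le_tsum hd₁ k fun j _ => dbound_nonneg _ _)
    (dbound_nonneg _ _)

lemma diag_step (g₁ g₂ : ℝ → ℂ) (hc₁ : Continuous g₁) (hc₂ : Continuous g₂)
    (hg₁ : Summable (supk g₁)) (hg₂ : Summable (supk g₂))
    (N : ℕ) (hN : 1 ≤ N) (a b : Fin N → ℂ) :
    (∑' r : Idx N, a r.1.1 * (starRingEnd ℂ) (b r.1.2) * Cint g₁ g₂ N r *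
        (if r.1.1 = r.1.2 ∧ r.2.1 = r.2.2 then (N:ℂ) else 0))
      = ∑ n : Fin N, (a n * (starRingEnd ℂ) (b n) * N) *
          ∑' k : ℤ, Cint g₁ g₂ N ((n,n),(k,k)) := by
  set G : Fin N × ℤ → ℂ := fun s =>
    a s.1 * (starRingEnd ℂ) (b s.1) * Cint g₁ g₂ N ((s.1,s.1),(s.2,s.2)) * N with hG
  have hGsum : Summable G := by
    apply Summable.of_norm
    refine Summable.of_nonneg_of_le (fun s => norm_nonneg _) (fun s => ?_)
      ((Summable.mul_of_nonneg (Summable.of_finite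
          (f := fun q : Fin N => ‖a q‖ * ‖b q‖ * N))
        (summable_dd g₁ g₂ hg₁ hg₂) (fun q => by positivity)
        (fun k => mul_nonneg (dbound_nonneg _ _) (dbound_nonneg _ _))))
    simp only [hG, norm_mul, RCLike.norm_conj]
    have hC := norm_Cint_le g₁ g₂ hc₁ hc₂ N hN ((s.1,s.1),(s.2,s.2))
    have hNn : ‖((N:ℕ):ℂ)‖ = (N:ℝ) := by
      rw [Complex.norm_natCast]
    rw [hNn]
    calc ‖a s.1‖ * ‖b s.1‖ * ‖Cint g₁ g₂ N ((s.1,s.1),(s.2,s.2))‖ * N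
        ≤ ‖a s.1‖ * ‖b s.1‖ * (dbound g₁ s.2 * dbound g₂ s.2) * N := by
          refine mul_le_mul_of_nonneg_right (mul_le_mul_of_nonneg_left hC (by positivity))
            (Nat.cast_nonneg _)
      _ = ‖a s.1‖ * ‖b s.1‖ * N * (dbound g₁ s.2 * dbound g₂ s.2) := by ring
  have hbij : (∑' r : Idx N, a r.1.1 * (starRingEnd ℂ) (b r.1.2) * Cint g₁ g₂ N r *
      (if r.1.1 = r.1.2 ∧ r.2.1 = r.2.2 then (N:ℂ) else 0)) = ∑' s, G s := by
    apply tsum_eq_tsum_of_ne_zero_bij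
      (i := fun s => ((((s : Fin N × ℤ).1, (s : Fin N × ℤ).1) : Fin N × Fin N),
        (((s : Fin N × ℤ).2, (s : Fin N × ℤ).2) : ℤ × ℤ)))
    · intro s s' h
      simp only [Prod.mk.injEq] at h
      exact Subtype.ext (Prod.ext h.1.1 h.2.1)
    · rintro ⟨⟨n, m⟩, k, j⟩ hr
      rw [Function.mem_support] at hr
      have hcond : n = m ∧ k = j := by
        by_contra hcnd
        rw [if_neg hcnd, mul_zero] at hr
        exact hr rfl
      obtain ⟨rfl, rfl⟩ := hcond
      have hGs : (n, k) ∈ Function.support G := by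
        rw [Function.mem_support, hG]
        intro h0
        apply hr
        rw [if_pos (⟨rfl, rfl⟩ : n = n ∧ k = k)]
        exact h0
      exact ⟨⟨(n, k), hGs⟩, rfl⟩
    · rintro ⟨⟨n, k⟩, hs⟩
      show (a n * (starRingEnd ℂ) (b n) * Cint g₁ g₂ N ((n,n),(k,k)) *
        (if (n = n ∧ k = k) then (N:ℂ) else 0)) = G (n, k)
      rw [if_pos (⟨rfl, rfl⟩ : n = n ∧ k = k)]
  rw [hbij, Summable.tsum_prod' hGsum hGsum.prod_factor, tsum_fintype]
  refine Finset.sum_congr rfl fun n _ => ?_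
  rw [← tsum_mul_left]
  refine tsum_congr fun k => ?_
  simp only [hG]
  ring

lemma integrable_conj_mul (g₁ g₂ : ℝ → ℂ) (hc₁ : Continuous g₁)
    (hL₁ : MemLp g₁ 2 (volume : Measure ℝ)) (hL₂ : MemLp g₂ 2 (volume : Measure ℝ)) :
    Integrable (fun t => (starRingEnd ℂ) (g₁ t) * g₂ t) volume := by
  have hconj : MemLp (fun t => (starRingEnd ℂ) (g₁ t)) 2 (volume : Measure ℝ) :=
    hL₁.congr_norm ((continuous_star.comp hc₁).aestronglyMeasurable)
      (Filter.Eventually.of_forall fun t => (RCLike.norm_conj _).symm)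
  have hpqr : (1:ℝ≥0∞)/1 = 1/2 + 1/2 := by
    rw [ENNReal.div_add_div_same, one_div_one, show (1:ℝ≥0∞) + 1 = 2 from one_add_one_eq_two,
      ENNReal.div_self (by norm_num) (by norm_num)]
  have h := hL₂.smul (r := 1) hconj
  rw [memLp_one_iff_integrable] at h
  exact h.congr (Filter.Eventually.of_forall fun t => by
    simp [Pi.smul_apply', smul_eq_mul])

lemma sum_Cint (g₁ g₂ : ℝ → ℂ)
    (hf : Integrable (fun t => (starRingEnd ℂ) (g₁ t) * g₂ t) volume)
    (N : ℕ) (n : Fin N) :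
    (∑' k : ℤ, Cint g₁ g₂ N ((n,n),(k,k))) = ∫ t, (starRingEnd ℂ) (g₁ t) * g₂ t := by
  set c : ℝ := (n:ℝ)/N with hc
  set f : ℝ → ℂ := fun t => (starRingEnd ℂ) (g₁ t) * g₂ t with hfdef
  have hCk : ∀ k : ℤ, Cint g₁ g₂ N ((n,n),(k,k))
      = ∫ u in Set.Ioc (c - k - 1) (c - k), f u := by
    intro k
    rw [Cint]
    have heq : ∀ x : ℝ, Pfun g₁ g₂ N ((n,n),(k,k)) x = f ((c - k) - x) := by
      intro x
      simp only [Pfun, hfdef]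
      have h1 : (((n:ℝ))/N - x - (k:ℤ)) = (c - k) - x := by rw [hc]; ring
      rw [h1]
    rw [setIntegral_congr_fun measurableSet_Ioc (fun x _ => heq x)]
    rw [← intervalIntegral.integral_of_le zero_le_one,
      intervalIntegral.integral_comp_sub_left f (c - k), sub_zero,
      intervalIntegral.integral_of_le (by linarith : c - k - 1 ≤ c - k)]
  have hdisj : Pairwise (Function.onFun Disjoint fun k : ℤ => Set.Ioc (c - k - 1) (c - k)) := by
    intro k k' hkk'
    simp only [Function.onFun]
    rw [Set.disjoint_left]
    intro u hu hu'
    apply hkk'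
    have h1 : k = ⌊c - u⌋ := by
      rw [eq_comm, Int.floor_eq_iff]
      constructor
      · linarith [hu.2]
      · linarith [hu.1]
    have h2 : k' = ⌊c - u⌋ := by
      rw [eq_comm, Int.floor_eq_iff]
      constructor
      · linarith [hu'.2]
      · linarith [hu'.1]
    rw [h1, h2]
  have hunion : (⋃ k : ℤ, Set.Ioc (c - k - 1) (c - k)) = Set.univ := by
    ext u
    simp only [Set.mem_iUnion, Set.mem_Ioc, Set.mem_univ, iff_true]
    refine ⟨⌊c - u⌋, ?_, ?_⟩
    · linarith [Int.lt_floor_add_one (c - u)]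
    · linarith [Int.floor_le (c - u)]
  have hs := hasSum_integral_iUnion (μ := volume) (f := f)
    (fun k : ℤ => measurableSet_Ioc) hdisj (by rw [hunion]; exact hf.integrableOn)
  rw [hunion, Measure.restrict_univ] at hs
  simp_rw [hCk]
  exact hs.tsum_eq

end MoyalAux

theorem moyal_flat_torus (N : ℕ) (hN : 1 ≤ N) (g₁ g₂ : ℝ → ℂ)
    (hc₁ : Continuous g₁) (hc₂ : Continuous g₂)
    (hL₁ : MemLp g₁ 2 (volume : Measure ℝ)) (hL₂ : MemLp g₂ 2 (volume : Measure ℝ))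
    (hg₁ : Summable fun k : ℤ => ⨆ t : Set.Icc (0 : ℝ) 1, ‖g₁ ((t : ℝ) + k)‖)
    (hg₂ : Summable fun k : ℤ => ⨆ t : Set.Icc (0 : ℝ) 1, ‖g₂ ((t : ℝ) + k)‖)
    (a b : Fin N → ℂ) :
    (∫ ξ in (0 : ℝ)..N, ∫ x in (0 : ℝ)..1,
        stftSN g₁ N a x ξ * (starRingEnd ℂ) (stftSN g₂ N b x ξ)) =
      N * (∑ n : Fin N, a n * (starRingEnd ℂ) (b n)) *
        ∫ t : ℝ, g₂ t * (starRingEnd ℂ) (g₁ t) := by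
  have hg₁' : Summable (supk g₁) := hg₁
  have hg₂' : Summable (supk g₂) := hg₂
  have hf : Integrable (fun t => (starRingEnd ℂ) (g₁ t) * g₂ t) volume :=
    integrable_conj_mul g₁ g₂ hc₁ hL₁ hL₂
  rw [step_outer g₁ g₂ hc₁ hc₂ hg₁' hg₂' N hN a b,
    diag_step g₁ g₂ hc₁ hc₂ hg₁' hg₂' N hN a b]
  have hint : (∫ t, (starRingEnd ℂ) (g₁ t) * g₂ t) = ∫ t, g₂ t * (starRingEnd ℂ) (g₁ t) := by
    congr 1
    funext t
    ring
  calc (∑ n : Fin N, (a n * (starRingEnd ℂ) (b n) * N) * ∑' k : ℤ, Cint g₁ g₂ N ((n,n),(k,k)))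
      = ∑ n : Fin N, (a n * (starRingEnd ℂ) (b n) * N) *
          ∫ t, g₂ t * (starRingEnd ℂ) (g₁ t) := by
        refine Finset.sum_congr rfl fun n _ => ?_
        rw [sum_Cint g₁ g₂ hf N n, hint]
    _ = N * (∑ n : Fin N, a n * (starRingEnd ℂ) (b n)) *
          ∫ t, g₂ t * (starRingEnd ℂ) (g₁ t) := by
        conv_rhs => rw [Finset.mul_sum, Finset.sum_mul]
        refine Finset.sum_congr rfl fun n _ => by ring
end

section
/- Let g : ℝ → ℂ be continuous with ∑_{k∈ℤ} sup_{t∈[0,1]}|g(t+k)| < ∞ and g ∈ L²(ℝ). Then for every y ∈ ℝ, ∫_0^1 ∫_0^1 |Zg(y - x, ξ)|² dx dξ = ‖g‖²_{L²(ℝ)}, where Zg(x,ξ) = ∑_{k∈ℤ} g(x-k)e^{2πikξ}. -/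
open Complex MeasureTheory

namespace ZakProof

/-- The character. -/
noncomputable def E (n : ℤ) (ξ : ℝ) : ℂ := Complex.exp (2 * Real.pi * Complex.I * n * ξ)

lemma zak_eq (h : ℝ → ℂ) (x ξ : ℝ) : zak h x ξ = ∑' k : ℤ, h (x - k) * E k ξ := rfl

lemma E_norm (n : ℤ) (ξ : ℝ) : ‖E n ξ‖ = 1 := by
  have h : (2 * (Real.pi : ℂ) * Complex.I * n * ξ) = ((2 * Real.pi * n * ξ : ℝ) : ℂ) * Complex.I := by
    push_cast; ring
  rw [E, h, Complex.norm_exp_ofReal_mul_I]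

lemma E_conj (n : ℤ) (ξ : ℝ) : (starRingEnd ℂ) (E n ξ) = E (-n) ξ := by
  rw [E, E, ← Complex.exp_conj]
  congr 1
  simp only [map_mul, Complex.conj_I, Complex.conj_ofReal, map_ofNat, map_intCast]
  push_cast
  ring

lemma E_mul (n m : ℤ) (ξ : ℝ) : E n ξ * E m ξ = E (n + m) ξ := by
  rw [E, E, E, ← Complex.exp_add]
  congr 1
  push_cast
  ring

lemma E_continuous (n : ℤ) : Continuous (E n) := by
  exact Complex.continuous_exp.comp (continuous_const.mul Complex.continuous_ofReal)

lemma E_integral (n : ℤ) :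
    (∫ ξ in Set.Ioc (0 : ℝ) 1, E n ξ) = if n = 0 then 1 else 0 := by
  rw [← intervalIntegral.integral_of_le zero_le_one]
  by_cases hn : n = 0
  · simp [E, hn]
  · have hc : (2 * (Real.pi : ℂ) * Complex.I * n) ≠ 0 := by
      refine mul_ne_zero (mul_ne_zero (mul_ne_zero two_ne_zero ?_) Complex.I_ne_zero)
        (Int.cast_ne_zero.mpr hn)
      exact_mod_cast Complex.ofReal_ne_zero.mpr Real.pi_ne_zero
    have h := integral_exp_mul_complex (a := 0) (b := 1) hc
    have h1 : Complex.exp (2 * (Real.pi : ℂ) * Complex.I * n * (1 : ℝ)) = 1 := by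
      push_cast
      rw [mul_one, show 2 * (Real.pi : ℂ) * Complex.I * n = (n : ℂ) * (2 * Real.pi * Complex.I) by
        ring]
      exact Complex.exp_int_mul_two_pi_mul_I n
    rw [if_neg hn]
    simp only [E]
    rw [h, h1]
    norm_num


/-- Sup of `‖g‖` on `[k, k+1]`. -/
noncomputable def supA (g : ℝ → ℂ) (k : ℤ) : ℝ := ⨆ t : Set.Icc (0 : ℝ) 1, ‖g ((t : ℝ) + k)‖

lemma supA_nonneg (g : ℝ → ℂ) (k : ℤ) : 0 ≤ supA g k :=
  Real.iSup_nonneg fun _ => norm_nonneg _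

lemma norm_le_supA (g : ℝ → ℂ) (hc : Continuous g) (u : ℝ) : ‖g u‖ ≤ supA g ⌊u⌋ := by
  have hbdd : BddAbove (Set.range fun t : Set.Icc (0:ℝ) 1 => ‖g ((t : ℝ) + ⌊u⌋)‖) := by
    obtain ⟨C, hC⟩ := isCompact_Icc.exists_bound_of_continuousOn
      (Continuous.continuousOn ((hc.comp (continuous_id.add continuous_const)).norm)
        (s := Set.Icc (0:ℝ) 1))
    refine ⟨C, ?_⟩
    rintro v ⟨t, rfl⟩
    exact (le_abs_self _).trans (by simpa using hC t t.2)
  have h1 : Int.fract u ∈ Set.Icc (0:ℝ) 1 := ⟨Int.fract_nonneg u, (Int.fract_lt_one u).le⟩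
  have h3 := le_ciSup hbdd (⟨Int.fract u, h1⟩ : Set.Icc (0:ℝ) 1)
  have h2 : Int.fract u + (⌊u⌋ : ℝ) = u := Int.fract_add_floor u
  simpa [supA, h2] using h3

/-- Interchange of integral over `Ioc 0 1` with a `tsum`, given uniform bounds. -/
lemma integral_tsum_Ioc {F : ℤ → ℝ → ℂ} {B : ℤ → ℝ}
    (hmeas : ∀ k, AEStronglyMeasurable (F k) (volume.restrict (Set.Ioc (0:ℝ) 1)))
    (hbound : ∀ k, ∀ x ∈ Set.Ioc (0:ℝ) 1, ‖F k x‖ ≤ B k)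
    (hB : Summable B) :
    (∫ x in Set.Ioc (0:ℝ) 1, ∑' k : ℤ, F k x) = ∑' k : ℤ, ∫ x in Set.Ioc (0:ℝ) 1, F k x := by
  have hvol : volume (Set.Ioc (0:ℝ) 1) = 1 := by simp [Real.volume_Ioc]
  have hvollt : volume (Set.Ioc (0:ℝ) 1) < ⊤ := by rw [hvol]; exact ENNReal.one_lt_top
  have hint : ∀ k, IntegrableOn (F k) (Set.Ioc (0:ℝ) 1) := by
    intro k
    have hconst : IntegrableOn (fun _ : ℝ => B k) (Set.Ioc (0:ℝ) 1) volume :=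
      integrableOn_const hvollt.ne
    refine Integrable.mono' hconst (hmeas k) ?_
    exact (ae_restrict_iff' measurableSet_Ioc).mpr (ae_of_all _ (hbound k))
  have hnorm : ∀ k, (∫ x in Set.Ioc (0:ℝ) 1, ‖F k x‖) ≤ B k := by
    intro k
    calc (∫ x in Set.Ioc (0:ℝ) 1, ‖F k x‖)
        ≤ ∫ _x in Set.Ioc (0:ℝ) 1, B k :=
          setIntegral_mono_on (hint k).norm
            (integrableOn_const hvollt.ne : IntegrableOn (fun _ : ℝ => B k) _ _)
            measurableSet_Ioc (hbound k)
      _ = B k := by simp [hvol]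
  have hsum : Summable fun k : ℤ => ∫ x in Set.Ioc (0:ℝ) 1, ‖F k x‖ :=
    Summable.of_nonneg_of_le (fun k => integral_nonneg fun x => norm_nonneg _) hnorm hB
  exact (integral_tsum_of_summable_integral_norm hint hsum).symm

end ZakProof

theorem zak_shifted_unitarity (g : ℝ → ℂ) (hc : Continuous g)
    (hL : MemLp g 2 (volume : Measure ℝ))
    (hg : Summable fun k : ℤ => ⨆ t : Set.Icc (0 : ℝ) 1, ‖g ((t : ℝ) + k)‖)
    (y : ℝ) :
    (∫ ξ in (0 : ℝ)..1, ∫ x in (0 : ℝ)..1, ‖zak g (y - x) ξ‖ ^ 2) =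
      ∫ t : ℝ, ‖g t‖ ^ 2 := by
  classical
  have hg' : Summable (ZakProof.supA g) := hg
  set a : ℤ → ℝ := ZakProof.supA g with ha
  set b : ℤ → ℝ := fun k => a (⌊y⌋ - k) + a (⌊y⌋ - 1 - k) with hbdef
  have hb_nonneg : ∀ k, 0 ≤ b k := fun k =>
    add_nonneg (ZakProof.supA_nonneg g _) (ZakProof.supA_nonneg g _)
  have hb : Summable b := by
    refine Summable.add ?_ ?_
    · exact hg'.comp_injective (Equiv.subLeft ⌊y⌋).injective
    · exact hg'.comp_injective (Equiv.subLeft (⌊y⌋ - 1)).injective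
  set C := ∑' k, b k with hC
  have hbC : ∀ k, b k ≤ C := fun k => hb.le_tsum k fun j _ => hb_nonneg j
  have hC_nonneg : 0 ≤ C := tsum_nonneg hb_nonneg
  have hgb : ∀ k : ℤ, ∀ x ∈ Set.Icc (0:ℝ) 1, ‖g (y - x - k)‖ ≤ b k := by
    intro k x hx
    have h0 := ZakProof.norm_le_supA g hc (y - x - k)
    have hfl : ⌊y - x - (k:ℝ)⌋ = ⌊y - x⌋ - k := Int.floor_sub_intCast (y - x) k
    have h1 : ⌊y⌋ - 1 ≤ ⌊y - x⌋ := by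
      have e : ⌊y - (1:ℝ)⌋ = ⌊y⌋ - 1 := by exact_mod_cast Int.floor_sub_intCast y 1
      have := Int.floor_le_floor (R := ℝ) (show y - 1 ≤ y - x by linarith [hx.2])
      omega
    have h2 : ⌊y - x⌋ ≤ ⌊y⌋ := Int.floor_le_floor (by linarith [hx.1])
    rw [hfl] at h0
    have hcase : ⌊y - x⌋ = ⌊y⌋ ∨ ⌊y - x⌋ = ⌊y⌋ - 1 := by omega
    rcases hcase with h | h
    · rw [h] at h0
      exact h0.trans (le_add_of_nonneg_right (ZakProof.supA_nonneg g _))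
    · rw [h] at h0
      exact h0.trans (le_add_of_nonneg_left (ZakProof.supA_nonneg g _))
  have hsummc : ∀ x ∈ Set.Icc (0:ℝ) 1, Summable fun k : ℤ => ‖g (y - x - k)‖ := fun x hx =>
    Summable.of_nonneg_of_le (fun k => norm_nonneg _) (fun k => hgb k x hx) hb
  have hprod : ∀ x ∈ Set.Icc (0:ℝ) 1, ∀ ξ : ℝ,
      zak g (y - x) ξ * (starRingEnd ℂ) (zak g (y - x) ξ) =
        ∑' k : ℤ, ∑' j : ℤ, g (y - x - k) * (starRingEnd ℂ) (g (y - x - j))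
          * ZakProof.E (k - j) ξ := by
    intro x hx ξ
    have hconj : (starRingEnd ℂ) (zak g (y - x) ξ) =
        ∑' j : ℤ, (starRingEnd ℂ) (g (y - x - j)) * ZakProof.E (-j) ξ := by
      rw [ZakProof.zak_eq, starRingEnd_apply, tsum_star]
      refine tsum_congr fun j => ?_
      rw [star_mul', ← starRingEnd_apply, ← starRingEnd_apply, ZakProof.E_conj]
    calc zak g (y - x) ξ * (starRingEnd ℂ) (zak g (y - x) ξ)
        = ∑' k : ℤ, g (y - x - k) * ZakProof.E k ξ * (starRingEnd ℂ) (zak g (y - x) ξ) := by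
          rw [ZakProof.zak_eq, ← tsum_mul_right]
      _ = ∑' k : ℤ, ∑' j : ℤ, g (y - x - k) * ZakProof.E k ξ *
            ((starRingEnd ℂ) (g (y - x - j)) * ZakProof.E (-j) ξ) := by
          rw [hconj]
          exact tsum_congr fun k => by rw [← tsum_mul_left]
      _ = ∑' k : ℤ, ∑' j : ℤ, g (y - x - k) * (starRingEnd ℂ) (g (y - x - j))
            * ZakProof.E (k - j) ξ := by
          refine tsum_congr fun k => tsum_congr fun j => ?_
          rw [sub_eq_add_neg k j, ← ZakProof.E_mul]
          ring
  -- continuity of building blocks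
  have cg : ∀ m : ℤ, Continuous fun x : ℝ => g (y - x - m) := fun m =>
    hc.comp (((continuous_const.sub continuous_id).sub continuous_const))
  have cterm : ∀ k j : ℤ, ∀ ξ : ℝ, Continuous fun x : ℝ =>
      g (y - x - k) * (starRingEnd ℂ) (g (y - x - j)) * ZakProof.E (k - j) ξ := fun k j ξ =>
    ((cg k).mul (Complex.continuous_conj.comp (cg j))).mul continuous_const
  have htermb : ∀ k j : ℤ, ∀ ξ : ℝ, ∀ x ∈ Set.Icc (0:ℝ) 1,
      ‖g (y - x - k) * (starRingEnd ℂ) (g (y - x - j)) * ZakProof.E (k - j) ξ‖ ≤ b k * b j := by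
    intro k j ξ x hx
    rw [norm_mul, norm_mul, ZakProof.E_norm, mul_one, RCLike.norm_conj]
    exact mul_le_mul (hgb k x hx) (hgb j x hx) (norm_nonneg _) (hb_nonneg k)
  set A : ℤ → ℤ → ℂ := fun k j =>
    ∫ x in Set.Ioc (0:ℝ) 1, g (y - x - k) * (starRingEnd ℂ) (g (y - x - j)) with hA
  have hAbound : ∀ k j, ‖A k j‖ ≤ b k * b j := by
    intro k j
    have h := norm_setIntegral_le_of_norm_le_const (μ := volume)
      (s := Set.Ioc (0:ℝ) 1) (C := b k * b j)
      (by rw [Real.volume_Ioc]; norm_num)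
      (f := fun x => g (y - x - k) * (starRingEnd ℂ) (g (y - x - j))) ?_
    · rw [hA]
      refine h.trans ?_
      rw [Real.volume_real_Ioc]
      norm_num
    · intro x hx
      have := htermb k j 0 x (Set.Ioc_subset_Icc_self hx)
      rwa [norm_mul, ZakProof.E_norm, mul_one] at this
  have step2 : ∀ ξ : ℝ,
      (∫ x in Set.Ioc (0:ℝ) 1, zak g (y - x) ξ * (starRingEnd ℂ) (zak g (y - x) ξ)) =
        ∑' k : ℤ, ∑' j : ℤ, A k j * ZakProof.E (k - j) ξ := by
    intro ξ
    have hmeas1 : ∀ k : ℤ, AEStronglyMeasurable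
        (fun x : ℝ => ∑' j : ℤ, g (y - x - k) * (starRingEnd ℂ) (g (y - x - j))
          * ZakProof.E (k - j) ξ) (volume.restrict (Set.Ioc (0:ℝ) 1)) := by
      intro k
      have hcont : ContinuousOn
          (fun x : ℝ => ∑' j : ℤ, g (y - x - k) * (starRingEnd ℂ) (g (y - x - j))
            * ZakProof.E (k - j) ξ) (Set.Icc (0:ℝ) 1) := by
        refine continuousOn_tsum (fun j => (cterm k j ξ).continuousOn)
          (hb.mul_left (b k)) ?_
        intro j x hx
        exact htermb k j ξ x hx
      exact (hcont.mono Set.Ioc_subset_Icc_self).aestronglyMeasurable measurableSet_Ioc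
    have hbound1 : ∀ k : ℤ, ∀ x ∈ Set.Ioc (0:ℝ) 1,
        ‖∑' j : ℤ, g (y - x - k) * (starRingEnd ℂ) (g (y - x - j)) * ZakProof.E (k - j) ξ‖
          ≤ b k * C := by
      intro k x hx
      have hx' := Set.Ioc_subset_Icc_self hx
      have hsn : Summable fun j : ℤ =>
          ‖g (y - x - k) * (starRingEnd ℂ) (g (y - x - j)) * ZakProof.E (k - j) ξ‖ :=
        Summable.of_nonneg_of_le (fun j => norm_nonneg _) (fun j => htermb k j ξ x hx')
          (hb.mul_left (b k))
      refine (norm_tsum_le_tsum_norm hsn).trans ?_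
      calc (∑' j : ℤ, ‖g (y - x - k) * (starRingEnd ℂ) (g (y - x - j)) * ZakProof.E (k - j) ξ‖)
          ≤ ∑' j : ℤ, b k * b j :=
            Summable.tsum_le_tsum (fun j => htermb k j ξ x hx') hsn (hb.mul_left (b k))
        _ = b k * C := tsum_mul_left
    rw [setIntegral_congr_fun measurableSet_Ioc
      (fun x hx => hprod x (Set.Ioc_subset_Icc_self hx) ξ)]
    rw [ZakProof.integral_tsum_Ioc hmeas1 hbound1 (hb.mul_right C)]
    refine tsum_congr fun k => ?_
    rw [ZakProof.integral_tsum_Ioc (fun j => ((cterm k j ξ).aestronglyMeasurable).restrict)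
      (fun j x hx => htermb k j ξ x (Set.Ioc_subset_Icc_self hx)) (hb.mul_left (b k))]
    refine tsum_congr fun j => ?_
    rw [hA]
    exact integral_mul_const _ _
  have hAEb : ∀ k j : ℤ, ∀ ξ : ℝ, ‖A k j * ZakProof.E (k - j) ξ‖ ≤ b k * b j := by
    intro k j ξ
    rw [norm_mul, ZakProof.E_norm, mul_one]
    exact hAbound k j
  have step3 : (∫ ξ in Set.Ioc (0:ℝ) 1, ∑' k : ℤ, ∑' j : ℤ, A k j * ZakProof.E (k - j) ξ) =
      ∑' k : ℤ, A k k := by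
    have hmeas1 : ∀ k : ℤ, AEStronglyMeasurable
        (fun ξ : ℝ => ∑' j : ℤ, A k j * ZakProof.E (k - j) ξ)
        (volume.restrict (Set.Ioc (0:ℝ) 1)) := by
      intro k
      have hcont : Continuous (fun ξ : ℝ => ∑' j : ℤ, A k j * ZakProof.E (k - j) ξ) := by
        refine continuous_tsum (fun j => continuous_const.mul (ZakProof.E_continuous _))
          (hb.mul_left (b k)) ?_
        intro j ξ
        exact hAEb k j ξ
      exact hcont.aestronglyMeasurable.restrict
    have hbound1 : ∀ k : ℤ, ∀ ξ ∈ Set.Ioc (0:ℝ) 1,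
        ‖∑' j : ℤ, A k j * ZakProof.E (k - j) ξ‖ ≤ b k * C := by
      intro k ξ _
      have hsn : Summable fun j : ℤ => ‖A k j * ZakProof.E (k - j) ξ‖ :=
        Summable.of_nonneg_of_le (fun j => norm_nonneg _) (fun j => hAEb k j ξ)
          (hb.mul_left (b k))
      refine (norm_tsum_le_tsum_norm hsn).trans ?_
      calc (∑' j : ℤ, ‖A k j * ZakProof.E (k - j) ξ‖)
          ≤ ∑' j : ℤ, b k * b j := Summable.tsum_le_tsum (fun j => hAEb k j ξ) hsn (hb.mul_left (b k))
        _ = b k * C := tsum_mul_left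
    rw [ZakProof.integral_tsum_Ioc hmeas1 hbound1 (hb.mul_right C)]
    refine tsum_congr fun k => ?_
    have hinner : ∀ j : ℤ, (∫ ξ in Set.Ioc (0:ℝ) 1, A k j * ZakProof.E (k - j) ξ) =
        A k j * (if k - j = 0 then 1 else 0) := by
      intro j
      rw [integral_const_mul, ZakProof.E_integral]
    rw [ZakProof.integral_tsum_Ioc (F := fun j ξ => A k j * ZakProof.E (k - j) ξ)
      (fun j => (continuous_const.mul (ZakProof.E_continuous _)).aestronglyMeasurable.restrict)
      (fun j ξ _ => hAEb k j ξ) (hb.mul_left (b k))]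
    rw [tsum_congr hinner]
    refine tsum_eq_single k ?_ |>.trans ?_
    · intro j hj
      rw [if_neg fun h => hj (by omega : j = k), mul_zero]
    · rw [sub_self, if_pos rfl, mul_one]
  -- Step 4: summing the diagonal gives the L² norm
  have hR : Integrable (fun t : ℝ => ‖g t‖ ^ 2) := by
    have h2 := hL.integrable_norm_rpow (by norm_num) (by norm_num)
    refine h2.congr ?_
    refine ae_of_all _ fun t => ?_
    show ‖g t‖ ^ ((2:ENNReal).toReal) = ‖g t‖ ^ (2:ℕ)
    rw [show (2:ENNReal).toReal = ((2:ℕ):ℝ) by norm_num]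
    exact Real.rpow_natCast _ 2
  have hUnion : (⋃ k : ℤ, Set.Ioc (y - k - 1) (y - k)) = Set.univ := by
    ext u
    simp only [Set.mem_iUnion, Set.mem_univ, iff_true, Set.mem_Ioc]
    refine ⟨⌊y - u⌋, ?_, ?_⟩
    · have := Int.lt_floor_add_one (y - u)
      linarith
    · have := Int.floor_le (y - u)
      linarith
  have hdisj : Pairwise (Function.onFun Disjoint fun k : ℤ => Set.Ioc (y - k - 1) (y - k)) := by
    intro k k' hkk'
    rcases hkk'.lt_or_gt with h | h
    · have hk : (k : ℝ) + 1 ≤ (k' : ℝ) := by exact_mod_cast Int.add_one_le_of_lt h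
      refine Set.Ioc_disjoint_Ioc.mpr ?_
      calc min (y - k) (y - k') ≤ y - k' := min_le_right _ _
        _ ≤ y - k - 1 := by linarith
        _ ≤ max (y - k - 1) (y - k' - 1) := le_max_left _ _
    · have hk : (k' : ℝ) + 1 ≤ (k : ℝ) := by exact_mod_cast Int.add_one_le_of_lt h
      refine Set.Ioc_disjoint_Ioc.mpr ?_
      calc min (y - k) (y - k') ≤ y - k := min_le_left _ _
        _ ≤ y - k' - 1 := by linarith
        _ ≤ max (y - k - 1) (y - k' - 1) := le_max_right _ _
  have hsum4 : HasSum (fun k : ℤ => ∫ t in Set.Ioc (y - k - 1) (y - k), ‖g t‖ ^ 2)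
      (∫ t : ℝ, ‖g t‖ ^ 2) := by
    have h := hasSum_integral_iUnion (μ := volume) (f := fun t : ℝ => ‖g t‖ ^ 2)
      (s := fun k : ℤ => Set.Ioc (y - k - 1) (y - k))
      (fun k => measurableSet_Ioc) hdisj (by rw [hUnion]; exact hR.integrableOn)
    rwa [hUnion, setIntegral_univ] at h
  have hAkk : ∀ k : ℤ, A k k = ((∫ t in Set.Ioc (y - k - 1) (y - k), ‖g t‖ ^ 2 : ℝ) : ℂ) := by
    intro k
    have h1 : ∀ x : ℝ, g (y - x - k) * (starRingEnd ℂ) (g (y - x - k)) =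
        ((‖g (y - x - k)‖ ^ 2 : ℝ) : ℂ) := fun x => by
      rw [Complex.mul_conj, Complex.normSq_eq_norm_sq]
    calc A k k = ∫ x in Set.Ioc (0:ℝ) 1, ((‖g (y - x - k)‖ ^ 2 : ℝ) : ℂ) := by
          rw [hA]
          exact integral_congr_ae (ae_of_all _ fun x => h1 x)
      _ = ((∫ x in Set.Ioc (0:ℝ) 1, ‖g (y - x - k)‖ ^ 2 : ℝ) : ℂ) := integral_ofReal
      _ = ((∫ t in Set.Ioc (y - k - 1) (y - k), ‖g t‖ ^ 2 : ℝ) : ℂ) := by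
          norm_cast
          rw [← intervalIntegral.integral_of_le zero_le_one,
            ← intervalIntegral.integral_of_le (show y - k - 1 ≤ y - k by linarith)]
          have h := intervalIntegral.integral_comp_sub_left (a := (0:ℝ)) (b := 1)
            (fun t => ‖g t‖ ^ 2) (y - k)
          simp only [sub_zero] at h
          have e : ∀ x : ℝ, y - x - (k : ℝ) = y - (k : ℝ) - x := fun x => by ring
          simp_rw [e]
          exact h
  have hfinal : (∑' k : ℤ, A k k) = ((∫ t : ℝ, ‖g t‖ ^ 2 : ℝ) : ℂ) := by
    rw [tsum_congr hAkk]
    have h := hsum4.mapL Complex.ofRealCLM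
    simpa using h.tsum_eq
  -- Assembly
  have key : ((∫ ξ in (0:ℝ)..1, ∫ x in (0:ℝ)..1, ‖zak g (y - x) ξ‖ ^ 2 : ℝ) : ℂ) =
      ((∫ t : ℝ, ‖g t‖ ^ 2 : ℝ) : ℂ) := by
    rw [← intervalIntegral.integral_ofReal]
    calc (∫ ξ in (0:ℝ)..1, ((∫ x in (0:ℝ)..1, ‖zak g (y - x) ξ‖ ^ 2 : ℝ) : ℂ))
        = ∫ ξ in (0:ℝ)..1, ∫ x in (0:ℝ)..1, ((‖zak g (y - x) ξ‖ ^ 2 : ℝ) : ℂ) := by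
          refine intervalIntegral.integral_congr fun ξ _ => ?_
          exact (intervalIntegral.integral_ofReal).symm
      _ = ∫ ξ in (0:ℝ)..1, ∫ x in (0:ℝ)..1,
            zak g (y - x) ξ * (starRingEnd ℂ) (zak g (y - x) ξ) := by
          refine intervalIntegral.integral_congr fun ξ _ => ?_
          refine intervalIntegral.integral_congr fun x _ => ?_
          rw [Complex.mul_conj, Complex.normSq_eq_norm_sq]
      _ = ∫ ξ in (0:ℝ)..1, ∑' k : ℤ, ∑' j : ℤ, A k j * ZakProof.E (k - j) ξ := by
          refine intervalIntegral.integral_congr fun ξ _ => ?_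
          rw [intervalIntegral.integral_of_le zero_le_one]
          exact step2 ξ
      _ = ∑' k : ℤ, A k k := by
          rw [intervalIntegral.integral_of_le zero_le_one]
          exact step3
      _ = ((∫ t : ℝ, ‖g t‖ ^ 2 : ℝ) : ℂ) := hfinal
  exact_mod_cast key
end
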